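/- (LLN for the rescaled Laguerre polynomial.) Fix d ≥ 1 and let p(x) := d!·(−d)^{−d}·L_{0,d}(dx) = x^d + Σ_{j=1}^{d} (−1)^j binom(d,j) (d!/((d−j)!·d^j)) x^{d−j}, where L_{0,d} is the Laguerre polynomial L_{α,d}(x) = Σ_{i=0}^d ((−x)^i/i!) binom(d+α, d−i) with α = 0. Then p is monic of degree d with only positive real roots (root multiset Λ), ẽ_j(Λ) = d!/((d−j)!·d^j) for 1 ≤ j ≤ d, and if λ_1^(n) ≥ ... ≥ λ_d^(n) denote the nonnegative real roots of p^{⊠_d n}, then lim_{n→∞} (λ_i^(n))^{1/n} = (d−i+1)/d for every 1 ≤ i ≤ d. -/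

import Mathlib

open Polynomial Filter

/-- Finite free multiplicative convolution of two polynomials of degree `d`:
for `p(x) = Σ (-1)^i p_i x^{d-i}` and `q(x) = Σ (-1)^i q_i x^{d-i}`,
`(p ⊠_d q)(x) = Σ (-1)^i (p_i q_i / binom(d,i)) x^{d-i}`. -/
noncomputable def ffmul (d : ℕ) (p q : Polynomial ℝ) : Polynomial ℝ :=
  ∑ i ∈ Finset.range (d + 1),
    Polynomial.C ((-1 : ℝ) ^ i * p.coeff (d - i) * q.coeff (d - i) / (d.choose i : ℝ)) *
      Polynomial.X ^ (d - i)

/-- `ffmulPow d p n` is the `n`-th finite free multiplicative convolution power `p^{⊠_d n}`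
(for `n ≥ 1`); the convolution identity `(x-1)^d` is used as the 0-th power. -/
noncomputable def ffmulPow (d : ℕ) (p : Polynomial ℝ) : ℕ → Polynomial ℝ
  | 0 => (Polynomial.X - 1) ^ d
  | n + 1 => ffmul d p (ffmulPow d p n)

/-- Normalized elementary symmetric function `ẽ_i(Λ) = e_i(Λ) / binom(d,i)`. -/
noncomputable def etilde (d i : ℕ) (Λ : Multiset ℝ) : ℝ :=
  Λ.esymm i / (d.choose i : ℝ)

/-- The Laguerre polynomial `L_{0,d}(x) = Σ_{i=0}^d ((−x)^i/i!) binom(d, d−i)`. -/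
noncomputable def laguerre0 (d : ℕ) : Polynomial ℝ :=
  ∑ i ∈ Finset.range (d + 1),
    Polynomial.C ((-1 : ℝ) ^ i / (i.factorial : ℝ) * (d.choose (d - i) : ℝ)) *
      Polynomial.X ^ i

/-- auxiliary: the target normalized coefficients -/
noncomputable def et (d j : ℕ) : ℝ :=
  (d.factorial : ℝ) / (((d - j).factorial : ℝ) * (d : ℝ) ^ j)

lemma et_pos {d : ℕ} (hd : 1 ≤ d) (j : ℕ) : 0 < et d j := by
  have h0 : (0 : ℝ) < d := by exact_mod_cast hd
  have h1 : (0 : ℝ) < (d.factorial : ℝ) := by exact_mod_cast d.factorial_pos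
  have h2 : (0 : ℝ) < ((d - j).factorial : ℝ) := by exact_mod_cast (d - j).factorial_pos
  exact div_pos h1 (mul_pos h2 (pow_pos h0 j))

lemma et_zero (d : ℕ) : et d 0 = 1 := by
  have : ((d.factorial : ℝ)) ≠ 0 := by exact_mod_cast d.factorial_ne_zero
  simp [et, this]

lemma coeff_sum_xpow (d : ℕ) (c : ℕ → ℝ) {j : ℕ} (hj : j ≤ d) :
    (∑ i ∈ Finset.range (d + 1), Polynomial.C (c i) * Polynomial.X ^ (d - i)).coeff (d - j)
      = c j := by
  rw [Polynomial.finset_sum_coeff]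
  rw [Finset.sum_eq_single j]
  · simp
  · intro i hi hne
    simp only [Finset.mem_range] at hi
    simp only [Polynomial.coeff_C_mul, Polynomial.coeff_X_pow]
    rw [if_neg (by omega), mul_zero]
  · intro h
    exact absurd (Finset.mem_range.mpr (by omega)) h

lemma coeff_ffmul (d : ℕ) (a b : Polynomial ℝ) {j : ℕ} (hj : j ≤ d) :
    (ffmul d a b).coeff (d - j)
      = (-1 : ℝ) ^ j * a.coeff (d - j) * b.coeff (d - j) / (d.choose j : ℝ) :=
  coeff_sum_xpow d _ hj

lemma coeff_p (d : ℕ) (hd : 1 ≤ d) (p : Polynomial ℝ)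
    (hp : p = Polynomial.X ^ d + ∑ k ∈ Finset.Icc 1 d,
        Polynomial.C ((-1 : ℝ) ^ k * (d.choose k : ℝ) *
            ((d.factorial : ℝ) / (((d - k).factorial : ℝ) * (d : ℝ) ^ k))) *
          Polynomial.X ^ (d - k))
    {j : ℕ} (hj : j ≤ d) :
    p.coeff (d - j) = (-1 : ℝ) ^ j * (d.choose j : ℝ) * et d j := by
  subst hp
  rw [Polynomial.coeff_add, Polynomial.finset_sum_coeff, Polynomial.coeff_X_pow]
  rcases eq_or_ne j 0 with rfl | hj0
  · rw [if_pos (by omega), Finset.sum_eq_zero, add_zero, et_zero]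
    · norm_num
    · intro k hk
      simp only [Finset.mem_Icc] at hk
      simp only [Polynomial.coeff_C_mul, Polynomial.coeff_X_pow]
      rw [if_neg (by omega), mul_zero]
  · rw [if_neg (by omega), Finset.sum_eq_single j]
    · rw [Polynomial.coeff_C_mul, Polynomial.coeff_X_pow, if_pos rfl, mul_one]
      simp [et]
    · intro k hk hne
      simp only [Finset.mem_Icc] at hk
      simp only [Polynomial.coeff_C_mul, Polynomial.coeff_X_pow]
      rw [if_neg (by omega), mul_zero]
    · intro h
      exact absurd (Finset.mem_Icc.mpr ⟨by omega, hj⟩) h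

lemma coeff_ffmulPow (d : ℕ) (hd : 1 ≤ d) (p : Polynomial ℝ)
    (hp : p = Polynomial.X ^ d + ∑ k ∈ Finset.Icc 1 d,
        Polynomial.C ((-1 : ℝ) ^ k * (d.choose k : ℝ) *
            ((d.factorial : ℝ) / (((d - k).factorial : ℝ) * (d : ℝ) ^ k))) *
          Polynomial.X ^ (d - k))
    (n : ℕ) {j : ℕ} (hj : j ≤ d) :
    (ffmulPow d p n).coeff (d - j) = (-1 : ℝ) ^ j * (d.choose j : ℝ) * (et d j) ^ n := by
  induction n with
  | zero =>
    show ((Polynomial.X - (1 : Polynomial ℝ)) ^ d).coeff (d - j) = _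
    have : (Polynomial.X - 1 : Polynomial ℝ) = Polynomial.X + Polynomial.C (-1) := by
      rw [Polynomial.C_neg, Polynomial.C_1, sub_eq_add_neg]
    rw [this, Polynomial.coeff_X_add_C_pow]
    have h1 : d - (d - j) = j := by omega
    rw [h1, Nat.choose_symm hj]
    ring
  | succ n ih =>
    show (ffmul d p (ffmulPow d p n)).coeff (d - j) = _
    rw [coeff_ffmul d _ _ hj, ih, coeff_p d hd p hp hj]
    have hch : (0 : ℝ) < (d.choose j : ℝ) := by
      exact_mod_cast Nat.choose_pos hj
    have h2 : ((-1 : ℝ)) ^ j * (-1) ^ j = 1 := by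
      rw [← pow_add, ← two_mul, pow_mul]; norm_num
    rw [div_eq_iff hch.ne']
    linear_combination ((-1 : ℝ) ^ j * ((d.choose j : ℝ)) ^ 2 * et d j ^ (n + 1)) * h2

lemma esymm_lam (d : ℕ) (hd : 1 ≤ d) (q : Polynomial ℝ) (f : ℕ → ℝ)
    (hq : q = ∏ i ∈ Finset.Icc 1 d, (Polynomial.X - Polynomial.C (f i)))
    {j : ℕ} (hj : j ≤ d) :
    q.coeff (d - j) = (-1 : ℝ) ^ j * ((Finset.Icc 1 d).val.map f).esymm j := by
  have hcard : Multiset.card ((Finset.Icc 1 d).val.map f) = d := by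
    rw [Multiset.card_map]
    simp [Nat.card_Icc]
  have hprod : q = (((Finset.Icc 1 d).val.map f).map fun r => Polynomial.X - Polynomial.C r).prod := by
    rw [hq, Multiset.map_map, Finset.prod]
    rfl
  rw [hprod, Multiset.prod_X_sub_C_coeff _ (by rw [hcard]; omega)]
  rw [hcard]
  congr 1 <;> rw [show d - (d - j) = j by omega]

/-- elements `≥ position`: the `i`-th smallest element of a subset of `Icc 1 d` is at least `i+1`. -/
lemma orderEmb_ge (j : ℕ) (t : Finset ℕ) (htc : t.card = j) (ht1 : ∀ x ∈ t, 1 ≤ x)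
    (i : Fin j) : (i : ℕ) + 1 ≤ t.orderEmbOfFin htc i := by
  obtain ⟨m, hm⟩ := i
  induction m with
  | zero => simpa using ht1 _ (t.orderEmbOfFin_mem htc ⟨0, hm⟩)
  | succ m ih =>
    have h1 := ih (by omega)
    have hlt : t.orderEmbOfFin htc ⟨m, by omega⟩ < t.orderEmbOfFin htc ⟨m + 1, hm⟩ := by
      apply (t.orderEmbOfFin htc).strictMono
      exact Fin.mk_lt_mk.mpr (Nat.lt_succ_self m)
    simp only at h1 hlt ⊢
    omega

lemma prod_subset_le (d j : ℕ) (g : ℕ → ℝ)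
    (hmono : ∀ a b, 1 ≤ a → a ≤ b → b ≤ d → g b ≤ g a)
    (hnneg : ∀ a, 1 ≤ a → a ≤ d → 0 ≤ g a)
    (hj : j ≤ d) (t : Finset ℕ) (ht : t ⊆ Finset.Icc 1 d) (htc : t.card = j) :
    ∏ k ∈ t, g k ≤ ∏ k ∈ Finset.Icc 1 j, g k := by
  have ht1 : ∀ x ∈ t, 1 ≤ x := fun x hx => (Finset.mem_Icc.mp (ht hx)).1
  have htd : ∀ x ∈ t, x ≤ d := fun x hx => (Finset.mem_Icc.mp (ht hx)).2
  have himg : t = Finset.image (fun i : Fin j => t.orderEmbOfFin htc i) Finset.univ := by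
    apply Finset.coe_injective
    rw [Finset.coe_image, Finset.coe_univ, Set.image_univ]
    exact (t.range_orderEmbOfFin htc).symm
  have hIcc : Finset.Icc 1 j = Finset.image (fun i : Fin j => (i : ℕ) + 1) Finset.univ := by
    ext x
    simp only [Finset.mem_Icc, Finset.mem_image, Finset.mem_univ, true_and]
    constructor
    · rintro ⟨h1, h2⟩; exact ⟨⟨x - 1, by omega⟩, by simp; omega⟩
    · rintro ⟨i, rfl⟩; exact ⟨by omega, by omega⟩
  rw [himg, hIcc, Finset.prod_image (by intro a _ b _ h; exact (t.orderEmbOfFin htc).injective h),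
    Finset.prod_image (by intro a _ b _ h; exact Fin.ext (by simp only at h; omega))]
  apply Finset.prod_le_prod
  · intro i _
    refine hnneg _ (ht1 _ (t.orderEmbOfFin_mem htc i)) (htd _ (t.orderEmbOfFin_mem htc i))
  · intro i _
    exact hmono _ _ (by omega) (orderEmb_ge j t htc ht1 i) (htd _ (t.orderEmbOfFin_mem htc i))

lemma P_le_esymm (d j : ℕ) (g : ℕ → ℝ)
    (hnneg : ∀ a, 1 ≤ a → a ≤ d → 0 ≤ g a) (hj : j ≤ d) :
    ∏ k ∈ Finset.Icc 1 j, g k ≤ ((Finset.Icc 1 d).val.map g).esymm j := by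
  rw [Finset.esymm_map_val]
  have hmem : Finset.Icc 1 j ∈ (Finset.Icc 1 d).powersetCard j := by
    rw [Finset.mem_powersetCard]
    exact ⟨Finset.Icc_subset_Icc_right hj, by simp [Nat.card_Icc]⟩
  have hnn : ∀ t ∈ (Finset.Icc 1 d).powersetCard j, 0 ≤ t.prod g := by
    intro t ht
    rw [Finset.mem_powersetCard] at ht
    exact Finset.prod_nonneg fun k hk => by
      have := Finset.mem_Icc.mp (ht.1 hk); exact hnneg k this.1 this.2
  exact Finset.single_le_sum hnn hmem

lemma esymm_le_P (d j : ℕ) (g : ℕ → ℝ)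
    (hmono : ∀ a b, 1 ≤ a → a ≤ b → b ≤ d → g b ≤ g a)
    (hnneg : ∀ a, 1 ≤ a → a ≤ d → 0 ≤ g a) (hj : j ≤ d) :
    ((Finset.Icc 1 d).val.map g).esymm j ≤ (d.choose j : ℝ) * ∏ k ∈ Finset.Icc 1 j, g k := by
  rw [Finset.esymm_map_val]
  have := Finset.sum_le_card_nsmul ((Finset.Icc 1 d).powersetCard j)
    (fun t => t.prod g) (∏ k ∈ Finset.Icc 1 j, g k) ?_
  · rwa [Finset.card_powersetCard, Nat.card_Icc, Nat.add_sub_cancel, nsmul_eq_mul] at this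
  · intro t ht
    rw [Finset.mem_powersetCard] at ht
    exact prod_subset_le d j g hmono hnneg hj t ht.1 ht.2

lemma tendsto_rpow_one_div_nat (c : ℝ) (hc : 0 < c) :
    Filter.Tendsto (fun n : ℕ => c ^ (1 / (n : ℝ))) Filter.atTop (nhds 1) := by
  have h := Filter.Tendsto.rpow (f := fun _ : ℕ => c) (g := fun n : ℕ => 1 / (n : ℝ))
    tendsto_const_nhds tendsto_one_div_atTop_nhds_zero_nat (Or.inl hc.ne')
  simpa using h

/-- LLN for the rescaled Laguerre polynomial
`p(x) = d!(−d)^{−d} L_{0,d}(dx) = x^d + Σ_{j=1}^d (−1)^j binom(d,j) (d!/((d−j)! d^j)) x^{d−j}`: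
`p` is monic of degree `d` with positive roots `Λ`, `ẽ_j(Λ) = d!/((d−j)! d^j)`, and
`(λ_i^(n))^{1/n} → (d−i+1)/d`. -/
theorem lln_laguerre (d : ℕ) (hd : 1 ≤ d) (p : Polynomial ℝ) (Λ : Multiset ℝ)
    (lam : ℕ → ℕ → ℝ)
    (hpL : p = Polynomial.C ((d.factorial : ℝ) * ((-(d : ℝ)) ^ d)⁻¹) *
        (laguerre0 d).comp (Polynomial.C (d : ℝ) * Polynomial.X))
    (hp : p = Polynomial.X ^ d + ∑ j ∈ Finset.Icc 1 d,
        Polynomial.C ((-1 : ℝ) ^ j * (d.choose j : ℝ) *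
            ((d.factorial : ℝ) / (((d - j).factorial : ℝ) * (d : ℝ) ^ j))) *
          Polynomial.X ^ (d - j))
    (hcard : Multiset.card Λ = d) (hpos : ∀ x ∈ Λ, (0 : ℝ) < x)
    (hroots : p = (Λ.map fun r => Polynomial.X - Polynomial.C r).prod)
    (hlam : ∀ n, 1 ≤ n → ffmulPow d p n
        = ∏ i ∈ Finset.Icc 1 d, (Polynomial.X - Polynomial.C (lam n i)))
    (hmono : ∀ n, 1 ≤ n → ∀ a b, 1 ≤ a → a ≤ b → b ≤ d → lam n b ≤ lam n a)
    (hnneg : ∀ n, 1 ≤ n → ∀ a, 1 ≤ a → a ≤ d → 0 ≤ lam n a) :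
    p.Monic ∧ p.natDegree = d ∧
    (∀ j, 1 ≤ j → j ≤ d →
      etilde d j Λ = (d.factorial : ℝ) / (((d - j).factorial : ℝ) * (d : ℝ) ^ j)) ∧
    (∀ i, 1 ≤ i → i ≤ d →
      Filter.Tendsto (fun n : ℕ => (lam n i) ^ (1 / (n : ℝ))) Filter.atTop
        (nhds (((d : ℝ) - i + 1) / d))) := by
  have hmonic : p.Monic := by
    rw [hroots]
    exact Polynomial.monic_multiset_prod_of_monic _ _ fun r _ => Polynomial.monic_X_sub_C r
  have hdeg : p.natDegree = d := by
    rw [hroots, Polynomial.natDegree_multiset_prod_of_monic _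
      (fun f hf => by obtain ⟨r, _, rfl⟩ := Multiset.mem_map.mp hf; exact Polynomial.monic_X_sub_C r)]
    simp [Multiset.map_map, Function.comp, hcard]
  -- elementary symmetric functions of Λ
  have hetilde : ∀ j, 1 ≤ j → j ≤ d →
      etilde d j Λ = (d.factorial : ℝ) / (((d - j).factorial : ℝ) * (d : ℝ) ^ j) := by
    intro j hj1 hj2
    have h1 : p.coeff (d - j) = (-1 : ℝ) ^ j * Λ.esymm j := by
      rw [hroots, Multiset.prod_X_sub_C_coeff _ (by rw [hcard]; omega), hcard,
        show d - (d - j) = j by omega]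
    have h2 := coeff_p d hd p hp hj2
    have h3 : Λ.esymm j = (d.choose j : ℝ) * et d j := by
      have hh := h1.symm.trans h2
      have hne : ((-1 : ℝ)) ^ j ≠ 0 := pow_ne_zero _ (by norm_num)
      exact mul_left_cancel₀ hne (hh.trans (mul_assoc _ _ _))
    rw [etilde, h3, et]
    have hch : ((d.choose j : ℝ)) ≠ 0 := by
      exact_mod_cast (Nat.choose_pos hj2).ne'
    field_simp
  refine ⟨hmonic, hdeg, hetilde, ?_⟩
  -- esymm of the roots of the convolution powers
  have hes : ∀ n, 1 ≤ n → ∀ j, j ≤ d →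
      ((Finset.Icc 1 d).val.map (lam n)).esymm j = (d.choose j : ℝ) * et d j ^ n := by
    intro n hn j hj
    have h1 := esymm_lam d hd (ffmulPow d p n) (lam n) (hlam n hn) hj
    have h2 := coeff_ffmulPow d hd p hp n hj
    have := h1.symm.trans h2
    have hne : ((-1 : ℝ)) ^ j ≠ 0 := pow_ne_zero _ (by norm_num)
    apply mul_left_cancel₀ hne
    rw [this]; ring
  set P : ℕ → ℕ → ℝ := fun n j => ∏ k ∈ Finset.Icc 1 j, lam n k with hP
  have hPlb : ∀ n, 1 ≤ n → ∀ j, j ≤ d → et d j ^ n ≤ P n j := by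
    intro n hn j hj
    have h1 := esymm_le_P d j (lam n) (hmono n hn) (hnneg n hn) hj
    rw [hes n hn j hj] at h1
    have hch : (0 : ℝ) < (d.choose j : ℝ) := by exact_mod_cast Nat.choose_pos hj
    exact le_of_mul_le_mul_left h1 hch
  have hPub : ∀ n, 1 ≤ n → ∀ j, j ≤ d → P n j ≤ (d.choose j : ℝ) * et d j ^ n := by
    intro n hn j hj
    have h1 := P_le_esymm d j (lam n) (hnneg n hn) hj
    rwa [hes n hn j hj] at h1
  have hPlim : ∀ j, j ≤ d →
      Filter.Tendsto (fun n : ℕ => P n j ^ (1 / (n : ℝ))) Filter.atTop (nhds (et d j)) := by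
    intro j hj
    have hch : (0 : ℝ) < (d.choose j : ℝ) := by exact_mod_cast Nat.choose_pos hj
    have hepos := et_pos hd j
    apply tendsto_of_tendsto_of_tendsto_of_le_of_le'
      (g := fun _ : ℕ => et d j)
      (h := fun n : ℕ => (d.choose j : ℝ) ^ (1 / (n : ℝ)) * et d j)
      tendsto_const_nhds
    · have := (tendsto_rpow_one_div_nat _ hch).mul_const (et d j)
      rwa [one_mul] at this
    · filter_upwards [Filter.eventually_ge_atTop 1] with n hn
      have hkey : (et d j ^ n) ^ (1 / (n : ℝ)) = et d j := by
        rw [one_div, Real.pow_rpow_inv_natCast hepos.le (by omega)]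
      rw [← hkey]
      exact Real.rpow_le_rpow (pow_nonneg hepos.le n) (hPlb n hn j hj) (by positivity)
    · filter_upwards [Filter.eventually_ge_atTop 1] with n hn
      have hkey : ((d.choose j : ℝ) * et d j ^ n) ^ (1 / (n : ℝ))
          = (d.choose j : ℝ) ^ (1 / (n : ℝ)) * et d j := by
        rw [Real.mul_rpow hch.le (pow_nonneg hepos.le n), one_div,
          Real.pow_rpow_inv_natCast hepos.le (by omega)]
      rw [← hkey]
      exact Real.rpow_le_rpow (le_trans (pow_nonneg hepos.le n) (hPlb n hn j hj))
        (hPub n hn j hj) (by positivity)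
  intro i hi1 hi2
  have hi1' : i - 1 ≤ d := by omega
  have hlim := (hPlim i hi2).div (hPlim (i - 1) hi1') (et_pos hd (i - 1)).ne'
  have hval : et d i / et d (i - 1) = ((d : ℝ) - i + 1) / d := by
    have hfac : d - (i - 1) = (d - i) + 1 := by omega
    have hipow : i = (i - 1) + 1 := by omega
    rw [et, et, hfac, Nat.factorial_succ]
    have hd0 : (0 : ℝ) < (d : ℝ) := by exact_mod_cast hd
    have hf1 : (0 : ℝ) < ((d - i).factorial : ℝ) := by exact_mod_cast (d - i).factorial_pos
    have hf2 : (0 : ℝ) < (d.factorial : ℝ) := by exact_mod_cast d.factorial_pos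
    have hcast : ((d : ℝ) - i + 1) = ((d - i + 1 : ℕ) : ℝ) := by
      push_cast [Nat.cast_sub hi2]; ring
    rw [hcast]
    rw [show (d : ℝ) ^ i = (d : ℝ) ^ (i - 1) * d by conv_lhs => rw [hipow, pow_succ]]
    push_cast
    field_simp
  rw [← hval]
  apply hlim.congr'
  filter_upwards [Filter.eventually_ge_atTop 1] with n hn
  have hP0pos : 0 < P n (i - 1) := lt_of_lt_of_le (pow_pos (et_pos hd _) n) (hPlb n hn _ hi1')
  have hPipos : 0 < P n i := lt_of_lt_of_le (pow_pos (et_pos hd _) n) (hPlb n hn _ hi2)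
  have hsplit : P n i = P n (i - 1) * lam n i := by
    have e := Finset.prod_Icc_succ_top (show 1 ≤ (i - 1) + 1 by omega) (lam n)
    rw [hP]
    simp only []
    rw [show i = (i - 1) + 1 by omega]
    exact e
  have hlameq : lam n i = P n i / P n (i - 1) := by
    rw [hsplit]; field_simp
  rw [hlameq, Real.div_rpow hPipos.le hP0pos.le]
  rfl
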